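/- Let 1 < α ≤ 2, let M ≥ 2 be an integer, let h > 0, and let C be the (M−1)×(M−1) Toeplitz matrix with entries C_{ij} = c_{i−j}^(α). Then there exists a real symmetric positive semidefinite matrix S (namely the square root C^{1/2} of C) such that, setting Λ^α = h^{−α/2} S, one has (Δ_h^α U₁, U₂) = (Λ^α U₁, Λ^α U₂) for all vectors U₁, U₂ ∈ ℝ^{M−1}, where Δ_h^α U = h^{−α} C U and (u, v) = h ∑_{j=1}^{M−1} u_j v_j. -/

import Mathlib

/-- The fractional centered difference coefficients
`c_k^(α) = (−1)^k Γ(α+1) / (Γ(α/2 − k + 1) Γ(α/2 + k + 1))`,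
interpreted as `0` when one of the Gamma arguments is a nonpositive integer. -/
noncomputable def fracCoeff (α : ℝ) (k : ℤ) : ℝ :=
  (-1 : ℝ) ^ k * Real.Gamma (α + 1) /
    (Real.Gamma (α / 2 - k + 1) * Real.Gamma (α / 2 + k + 1))

open Real MeasureTheory intervalIntegral Matrix

noncomputable def Wr (α b : ℝ) : ℝ := ∫ t in (0:ℝ)..(π/2), Real.sin t ^ α * Real.cos (2*b*t)

lemma cont_integrand {α : ℝ} (hα : 0 < α) (b : ℝ) :
    Continuous (fun t : ℝ => Real.sin t ^ α * Real.cos (2*b*t)) := by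
  have h1 : Continuous (fun t : ℝ => Real.sin t ^ α) := by
    rw [continuous_iff_continuousAt]
    intro t
    exact (Real.continuousAt_rpow_const _ _ (Or.inr hα.le)).comp Real.continuous_sin.continuousAt
  exact h1.mul (Real.continuous_cos.comp (continuous_const.mul continuous_id))

lemma hasDerivAt_F {α : ℝ} (hα : 1 < α) (k : ℕ) {t : ℝ} (ht : t ∈ Set.Icc (0:ℝ) (π/2)) :
    HasDerivAt (fun t : ℝ => Real.sin t ^ (α+1) * Real.cos ((2*k+1)*t))
      ((α - 2*k)/2 * (Real.sin t ^ α * Real.cos (2*(k:ℝ)*t))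
        + (α + 2*k + 2)/2 * (Real.sin t ^ α * Real.cos (2*((k:ℝ)+1)*t))) t := by
  have hsin : HasDerivAt Real.sin (Real.cos t) t := Real.hasDerivAt_sin t
  have h1 : HasDerivAt (fun y : ℝ => y ^ (α+1)) ((α+1) * Real.sin t ^ α) (Real.sin t) := by
    have := Real.hasDerivAt_rpow_const (x := Real.sin t) (p := α+1) (Or.inr (by linarith))
    simpa using this
  have h2 : HasDerivAt (fun t : ℝ => Real.sin t ^ (α+1)) ((α+1) * Real.sin t ^ α * Real.cos t) t :=
    h1.comp t hsin
  have h3 : HasDerivAt (fun t : ℝ => Real.cos ((2*k+1)*t))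
      (-Real.sin ((2*k+1)*t) * (2*k+1)) t := by
    have := (Real.hasDerivAt_cos ((2*(k:ℝ)+1)*t)).comp t ((hasDerivAt_id t).const_mul (2*(k:ℝ)+1))
    simpa [Function.comp_def] using this
  have h4 := h2.mul h3
  refine h4.congr_deriv ?_
  have hst : 0 ≤ Real.sin t := Real.sin_nonneg_of_nonneg_of_le_pi ht.1 (by
    have := Real.pi_pos; linarith [ht.2])
  have hpow : Real.sin t ^ (α+1) = Real.sin t ^ α * Real.sin t := by
    rcases eq_or_lt_of_le hst with h0 | h0
    · rw [← h0, Real.zero_rpow (by linarith), Real.zero_rpow (by linarith), zero_mul]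
    · rw [Real.rpow_add_one h0.ne']
  rw [hpow]
  have e1 : 2*(k:ℝ)*t = (2*k+1)*t - t := by ring
  have e2 : 2*((k:ℝ)+1)*t = (2*k+1)*t + t := by ring
  rw [e1, e2, Real.cos_sub, Real.cos_add]
  ring

lemma Wr_rec {α : ℝ} (hα1 : 1 < α) (k : ℕ) :
    (α + 2*k + 2) * Wr α ((k:ℝ)+1) = (2*k - α) * Wr α (k:ℝ) := by
  have hpi : (0:ℝ) ≤ π/2 := by positivity
  have hF := intervalIntegral.integral_eq_sub_of_hasDerivAt
    (f := fun t : ℝ => Real.sin t ^ (α+1) * Real.cos ((2*k+1)*t))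
    (f' := fun t => (α - 2*(k:ℝ))/2 * (Real.sin t ^ α * Real.cos (2*(k:ℝ)*t))
        + (α + 2*k + 2)/2 * (Real.sin t ^ α * Real.cos (2*((k:ℝ)+1)*t)))
    (a := 0) (b := π/2)
    (fun t ht => hasDerivAt_F hα1 k (by rwa [Set.uIcc_of_le hpi] at ht))
    ((((continuous_const.mul (cont_integrand (show (0:ℝ) < α by linarith) (k:ℝ))).add
        (continuous_const.mul (cont_integrand (show (0:ℝ) < α by linarith) ((k:ℝ)+1)))).intervalIntegrable 0 (π/2)))
  have hb : Real.sin (π/2) ^ (α+1) * Real.cos ((2*(k:ℝ)+1)*(π/2)) = 0 := by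
    have : (2*(k:ℝ)+1)*(π/2) = k * π + π/2 := by ring
    rw [this, Real.cos_add, Real.cos_pi_div_two, Real.sin_pi_div_two, Real.sin_nat_mul_pi]
    ring
  have ha : Real.sin 0 ^ (α+1) * Real.cos ((2*(k:ℝ)+1)*0) = 0 := by
    rw [Real.sin_zero, Real.zero_rpow (by linarith), zero_mul]
  simp only [hb, ha, sub_zero] at hF
  rw [intervalIntegral.integral_add (f := fun t => (α - 2*(k:ℝ))/2 * (Real.sin t ^ α * Real.cos (2*(k:ℝ)*t)))
      (g := fun t => (α + 2*k + 2)/2 * (Real.sin t ^ α * Real.cos (2*((k:ℝ)+1)*t)))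
      ((continuous_const.mul (cont_integrand (show (0:ℝ) < α by linarith) (k:ℝ))).intervalIntegrable 0 (π/2))
      ((continuous_const.mul (cont_integrand (show (0:ℝ) < α by linarith) ((k:ℝ)+1))).intervalIntegrable 0 (π/2)),
    intervalIntegral.integral_const_mul, intervalIntegral.integral_const_mul] at hF
  have hW : (α - 2*(k:ℝ))/2 * Wr α (k:ℝ) + (α + 2*k + 2)/2 * Wr α ((k:ℝ)+1) = 0 := hF
  linarith

lemma fracCoeff_rec {α : ℝ} (hα1 : 1 < α) (k : ℕ) :
    (α/2 + k + 1) * fracCoeff α ((k:ℤ)+1) = ((k:ℝ) - α/2) * fracCoeff α (k:ℤ) := by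
  have hspos : 0 < α/2 := by linarith
  have hQpos : 0 < Real.Gamma (α/2 + k + 1) := Real.Gamma_pos_of_pos (by positivity)
  have e1 : α/2 - (((k:ℤ)+1 : ℤ):ℝ) + 1 = α/2 - (k:ℝ) := by push_cast; ring
  have e2 : α/2 + (((k:ℤ)+1 : ℤ):ℝ) + 1 = (α/2 + (k:ℝ) + 1) + 1 := by push_cast; ring
  have ez : ((-1:ℝ)) ^ ((k:ℤ)+1) = -((-1:ℝ)) ^ (k:ℤ) := by
    rw [zpow_add_one₀ (by norm_num)]; ring
  have eQ : Real.Gamma ((α/2 + (k:ℝ) + 1) + 1) = (α/2 + k + 1) * Real.Gamma (α/2 + k + 1) :=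
    Real.Gamma_add_one (by positivity)
  simp only [fracCoeff, e1, e2, ez, eQ, Int.cast_natCast]
  by_cases hsk : α/2 - (k:ℝ) = 0
  · rw [hsk, Real.Gamma_zero]
    have : (k:ℝ) - α/2 = 0 := by linarith
    simp [this]
  · have eP : Real.Gamma (α/2 - (k:ℝ) + 1) = (α/2 - k) * Real.Gamma (α/2 - k) :=
      Real.Gamma_add_one hsk
    rw [eP]
    by_cases hG : Real.Gamma (α/2 - (k:ℝ)) = 0
    · simp [hG]
    · have hne1 : α/2 + (k:ℝ) + 1 ≠ 0 := by positivity
      have d1 : Real.Gamma (α/2-(k:ℝ)) * ((α/2+(k:ℝ)+1) * Real.Gamma (α/2+(k:ℝ)+1))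
          = (α/2+(k:ℝ)+1) * (Real.Gamma (α/2-(k:ℝ)) * Real.Gamma (α/2+(k:ℝ)+1)) := by ring
      have d2 : (α/2 - (k:ℝ)) * Real.Gamma (α/2-(k:ℝ)) * Real.Gamma (α/2+(k:ℝ)+1)
          = (α/2-(k:ℝ)) * (Real.Gamma (α/2-(k:ℝ)) * Real.Gamma (α/2+(k:ℝ)+1)) := by ring
      rw [show ((k:ℝ) - α/2) = -(α/2 - (k:ℝ)) by ring, d1, d2,
        ← mul_div_assoc, ← mul_div_assoc, neg_mul, neg_mul,
        mul_div_mul_left _ _ hne1, neg_div, neg_div, mul_div_mul_left _ _ hsk]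

lemma prop_key {α : ℝ} (hα1 : 1 < α) (k : ℕ) :
    fracCoeff α (k:ℤ) * Wr α 0 = fracCoeff α 0 * Wr α (k:ℝ) := by
  induction k with
  | zero => norm_num
  | succ n ih =>
    have h1 := fracCoeff_rec hα1 n
    have h2 := Wr_rec hα1 n
    have hne : (α/2 + (n:ℝ) + 1) ≠ 0 := by positivity
    have key : (α/2 + (n:ℝ) + 1) * (fracCoeff α ((n:ℤ)+1) * Wr α 0)
        = (α/2 + (n:ℝ) + 1) * (fracCoeff α 0 * Wr α ((n:ℝ)+1)) := by
      have l1 : (α/2 + (n:ℝ) + 1) * (fracCoeff α ((n:ℤ)+1) * Wr α 0)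
          = ((n:ℝ) - α/2) * (fracCoeff α (n:ℤ) * Wr α 0) := by
        rw [← mul_assoc, h1, mul_assoc]
      have l2 : ((n:ℝ) - α/2) * Wr α (n:ℝ) = (α/2 + (n:ℝ) + 1) * Wr α ((n:ℝ)+1) := by
        linarith
      rw [l1, ih]
      calc ((n:ℝ) - α/2) * (fracCoeff α 0 * Wr α (n:ℝ))
          = fracCoeff α 0 * (((n:ℝ) - α/2) * Wr α (n:ℝ)) := by ring
        _ = fracCoeff α 0 * ((α/2 + (n:ℝ) + 1) * Wr α ((n:ℝ)+1)) := by rw [l2]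
        _ = (α/2 + (n:ℝ) + 1) * (fracCoeff α 0 * Wr α ((n:ℝ)+1)) := by ring
    have := mul_left_cancel₀ hne key
    have ecast : ((n+1 : ℕ) : ℤ) = (n:ℤ)+1 := by push_cast; ring
    have ecast2 : ((n+1 : ℕ) : ℝ) = (n:ℝ)+1 := by push_cast; ring
    rw [ecast, ecast2]
    exact this

lemma Wr_zero_pos {α : ℝ} (hα1 : 1 < α) : 0 < Wr α 0 := by
  have hpi : (0:ℝ) < π/2 := by positivity
  apply intervalIntegral.intervalIntegral_pos_of_pos_on
    ((cont_integrand (show (0:ℝ) < α by linarith) 0).intervalIntegrable 0 (π/2))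
  · intro t ht
    have hs : 0 < Real.sin t := Real.sin_pos_of_pos_of_lt_pi ht.1
      (by have := Real.pi_pos; linarith [ht.2])
    have : Real.cos (2*(0:ℝ)*t) = 1 := by norm_num
    rw [this, mul_one]
    exact Real.rpow_pos_of_pos hs α
  · exact hpi

lemma fracCoeff_zero_pos {α : ℝ} (hα1 : 1 < α) : 0 < fracCoeff α 0 := by
  unfold fracCoeff
  have h1 : 0 < Real.Gamma (α+1) := Real.Gamma_pos_of_pos (by linarith)
  have h2 : 0 < Real.Gamma (α/2 - (0:ℤ) + 1) := Real.Gamma_pos_of_pos (by push_cast; linarith)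
  have h3 : 0 < Real.Gamma (α/2 + (0:ℤ) + 1) := Real.Gamma_pos_of_pos (by push_cast; linarith)
  positivity

lemma fracCoeff_neg {α : ℝ} (k : ℤ) : fracCoeff α (-k) = fracCoeff α k := by
  unfold fracCoeff
  have e1 : α/2 - ((-k : ℤ):ℝ) + 1 = α/2 + k + 1 := by push_cast; ring
  have e2 : α/2 + ((-k : ℤ):ℝ) + 1 = α/2 - k + 1 := by push_cast; ring
  have e3 : ((-1:ℝ)) ^ (-k) = ((-1:ℝ)) ^ k := by
    rcases Int.even_or_odd k with he | ho
    · rw [he.neg_one_zpow, (he.neg).neg_one_zpow]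
    · rw [ho.neg_one_zpow, (ho.neg).neg_one_zpow]
  rw [e1, e2, e3, mul_comm (Real.Gamma (α/2 + k + 1))]

lemma Wr_neg {α : ℝ} (b : ℝ) : Wr α (-b) = Wr α b := by
  unfold Wr
  congr 1
  ext t
  rw [show 2*(-b)*t = -(2*b*t) by ring, Real.cos_neg]

lemma fracCoeff_eq_int {α : ℝ} (hα1 : 1 < α) (k : ℤ) :
    fracCoeff α k * Wr α 0 = fracCoeff α 0 * Wr α (k:ℝ) := by
  obtain ⟨n, rfl | rfl⟩ := Int.eq_nat_or_neg k
  · exact_mod_cast prop_key hα1 n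
  · rw [fracCoeff_neg, show (((-(n:ℤ)):ℤ):ℝ) = -((n:ℕ):ℝ) by push_cast; ring, Wr_neg]
    exact_mod_cast prop_key hα1 n

lemma pointwise_sq {α : ℝ} {n : ℕ} (x : Fin n → ℝ) (t : ℝ) :
    ∑ i : Fin n, ∑ j : Fin n, x i * x j *
        (Real.sin t ^ α * Real.cos (2*(((i:ℕ):ℝ) - ((j:ℕ):ℝ))*t))
      = Real.sin t ^ α * ((∑ i : Fin n, x i * Real.cos (2*((i:ℕ):ℝ)*t))^2
          + (∑ i : Fin n, x i * Real.sin (2*((i:ℕ):ℝ)*t))^2) := by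
  have step1 : ∀ i j : Fin n, x i * x j *
        (Real.sin t ^ α * Real.cos (2*(((i:ℕ):ℝ) - ((j:ℕ):ℝ))*t))
      = Real.sin t ^ α * ((x i * Real.cos (2*((i:ℕ):ℝ)*t)) * (x j * Real.cos (2*((j:ℕ):ℝ)*t))
          + (x i * Real.sin (2*((i:ℕ):ℝ)*t)) * (x j * Real.sin (2*((j:ℕ):ℝ)*t))) := by
    intro i j
    rw [show 2*(((i:ℕ):ℝ) - ((j:ℕ):ℝ))*t = 2*((i:ℕ):ℝ)*t - 2*((j:ℕ):ℝ)*t by ring,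
      Real.cos_sub]
    ring
  simp only [step1, ← Finset.mul_sum]
  congr 1
  simp only [Finset.sum_add_distrib]
  rw [← Finset.sum_mul_sum, ← Finset.sum_mul_sum, sq, sq]

lemma quad_nonneg {α : ℝ} (hα1 : 1 < α) {n : ℕ} (x : Fin n → ℝ) :
    0 ≤ ∑ i : Fin n, ∑ j : Fin n, x i * x j * fracCoeff α ((i:ℕ) - ((j:ℕ):ℤ)) := by
  have hW0 := Wr_zero_pos hα1
  have hc0 := fracCoeff_zero_pos hα1
  have hrep : ∀ k : ℤ, fracCoeff α k = (fracCoeff α 0 / Wr α 0) * Wr α (k:ℝ) := by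
    intro k
    rw [div_mul_eq_mul_div, eq_div_iff hW0.ne']
    exact fracCoeff_eq_int hα1 k
  have hμ : 0 ≤ fracCoeff α 0 / Wr α 0 := le_of_lt (by positivity)
  have hcast : ∀ i j : Fin n, ((((i:ℕ) - ((j:ℕ):ℤ)) : ℤ) : ℝ) = ((i:ℕ):ℝ) - ((j:ℕ):ℝ) := by
    intro i j; push_cast; ring
  have hrw : ∀ i j : Fin n, x i * x j * fracCoeff α ((i:ℕ) - ((j:ℕ):ℤ))
      = (fracCoeff α 0 / Wr α 0) * (x i * x j * Wr α (((i:ℕ):ℝ) - ((j:ℕ):ℝ))) := by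
    intro i j
    rw [hrep, hcast]
    ring
  simp only [hrw, ← Finset.mul_sum]
  apply mul_nonneg hμ
  -- rewrite each term as an integral
  have hint : ∀ i j : Fin n, x i * x j * Wr α (((i:ℕ):ℝ) - ((j:ℕ):ℝ))
      = ∫ t in (0:ℝ)..(π/2), x i * x j *
          (Real.sin t ^ α * Real.cos (2*(((i:ℕ):ℝ) - ((j:ℕ):ℝ))*t)) := by
    intro i j
    rw [intervalIntegral.integral_const_mul]
    rfl
  simp only [hint]
  have hintg : ∀ (c : ℝ) (b : ℝ), IntervalIntegrable
      (fun t => c * (Real.sin t ^ α * Real.cos (2*b*t))) volume 0 (π/2) :=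
    fun c b => (continuous_const.mul (cont_integrand (show (0:ℝ) < α by linarith) b)).intervalIntegrable 0 (π/2)
  have swap1 : ∀ i : Fin n, ∑ j : Fin n, (∫ t in (0:ℝ)..(π/2), x i * x j *
          (Real.sin t ^ α * Real.cos (2*(((i:ℕ):ℝ) - ((j:ℕ):ℝ))*t)))
      = ∫ t in (0:ℝ)..(π/2), ∑ j : Fin n, x i * x j *
          (Real.sin t ^ α * Real.cos (2*(((i:ℕ):ℝ) - ((j:ℕ):ℝ))*t)) := by
    intro i
    exact (intervalIntegral.integral_finset_sum (fun j _ => hintg (x i * x j) _)).symm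
  simp only [swap1]
  have swap2 : ∑ i : Fin n, (∫ t in (0:ℝ)..(π/2), ∑ j : Fin n, x i * x j *
          (Real.sin t ^ α * Real.cos (2*(((i:ℕ):ℝ) - ((j:ℕ):ℝ))*t)))
      = ∫ t in (0:ℝ)..(π/2), ∑ i : Fin n, ∑ j : Fin n, x i * x j *
          (Real.sin t ^ α * Real.cos (2*(((i:ℕ):ℝ) - ((j:ℕ):ℝ))*t)) :=
    (intervalIntegral.integral_finset_sum
      (fun i _ => (continuous_finset_sum _ (fun j _ => continuous_const.mul
        (cont_integrand (show (0:ℝ) < α by linarith) _))).intervalIntegrable 0 (π/2))).symm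
  rw [swap2]
  apply intervalIntegral.integral_nonneg (by positivity)
  intro t ht
  rw [pointwise_sq]
  have hst : 0 ≤ Real.sin t := Real.sin_nonneg_of_nonneg_of_le_pi ht.1
    (by have := Real.pi_pos; linarith [ht.2])
  have : (0:ℝ) ≤ Real.sin t ^ α := Real.rpow_nonneg hst α
  positivity

open scoped MatrixOrder

theorem stmt4 (α : ℝ) (hα1 : 1 < α) (hα2 : α ≤ 2) (M : ℕ) (hM : 2 ≤ M)
    (h : ℝ) (hh : 0 < h)
    (Cm : Matrix (Fin (M - 1)) (Fin (M - 1)) ℝ)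
    (hC : ∀ i j, Cm i j = fracCoeff α ((i : ℤ) - (j : ℤ))) :
    ∃ S : Matrix (Fin (M - 1)) (Fin (M - 1)) ℝ, S.PosSemidef ∧ S * S = Cm ∧
      ∀ U₁ U₂ : Fin (M - 1) → ℝ,
        (h * ∑ j, (h ^ (-α) • Cm.mulVec U₁) j * U₂ j) =
        (h * ∑ j, ((h ^ (-α / 2) • S).mulVec U₁) j * ((h ^ (-α / 2) • S).mulVec U₂) j) := by
  have hCt : Cmᵀ = Cm := by
    ext i j
    rw [Matrix.transpose_apply, hC, hC, show ((j:ℤ) - (i:ℤ)) = -((i:ℤ) - (j:ℤ)) by ring,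
      fracCoeff_neg]
  have hsym : Cm.IsHermitian := by
    unfold Matrix.IsHermitian
    ext i j
    rw [Matrix.conjTranspose_apply, star_trivial, hC, hC,
      show ((j:ℤ) - (i:ℤ)) = -((i:ℤ) - (j:ℤ)) by ring, fracCoeff_neg]
  have hPSD : Cm.PosSemidef := by
    refine Matrix.PosSemidef.of_dotProduct_mulVec_nonneg hsym fun x => ?_
    have hq := quad_nonneg hα1 (n := M - 1) x
    simp only [star_trivial, dotProduct, Matrix.mulVec, Finset.mul_sum]
    have : ∀ i j : Fin (M-1), x i * (Cm i j * x j)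
        = x i * x j * fracCoeff α ((i:ℕ) - ((j:ℕ):ℤ)) := by
      intro i j; rw [hC]; push_cast; ring
    simp only [this]
    convert hq using 2
  classical
  refine ⟨CFC.sqrt Cm, (CFC.sqrt_nonneg Cm).posSemidef, CFC.sqrt_mul_sqrt_self Cm hPSD.nonneg, ?_⟩
  intro U₁ U₂
  set S := CFC.sqrt Cm with hSdef
  have hSsym : Sᵀ = S := by
    ext i j
    have h2 := congrFun (congrFun (CFC.sqrt_nonneg Cm).posSemidef.1 i) j
    rw [Matrix.conjTranspose_apply, star_trivial] at h2
    rw [Matrix.transpose_apply, ← hSdef] at *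
    exact h2
  have key : (S *ᵥ U₁) ⬝ᵥ (S *ᵥ U₂) = (Cm *ᵥ U₁) ⬝ᵥ U₂ := by
    have e1 : S *ᵥ U₁ = U₁ ᵥ* S := by
      conv_lhs => rw [← hSsym]
      rw [Matrix.mulVec_transpose]
    have e2 : Cm *ᵥ U₁ = U₁ ᵥ* Cm := by
      conv_lhs => rw [← hCt]
      rw [Matrix.mulVec_transpose]
    rw [e1, Matrix.dotProduct_mulVec, Matrix.vecMul_vecMul, CFC.sqrt_mul_sqrt_self Cm hPSD.nonneg, e2]
  simp only [Matrix.smul_mulVec, Pi.smul_apply, smul_eq_mul]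
  have lhs : ∑ j, (h ^ (-α) * (Cm *ᵥ U₁) j) * U₂ j
      = h ^ (-α) * ((Cm *ᵥ U₁) ⬝ᵥ U₂) := by
    rw [dotProduct, Finset.mul_sum]
    exact Finset.sum_congr rfl fun j _ => by ring
  have rhs : ∑ j, (h ^ (-α/2) * (S *ᵥ U₁) j) * (h ^ (-α/2) * (S *ᵥ U₂) j)
      = (h ^ (-α/2) * h ^ (-α/2)) * ((S *ᵥ U₁) ⬝ᵥ (S *ᵥ U₂)) := by
    rw [dotProduct, Finset.mul_sum]
    exact Finset.sum_congr rfl fun j _ => by ring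
  rw [lhs, rhs, key, ← Real.rpow_add hh, show -α/2 + -α/2 = -α by ring]
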